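/- Let A ≤ B with A nontrivial, and suppose u ∈ A * F(t) (free product with an infinite cyclic group) is a nontrivial element, and a ∈ A is nonidentity. If u becomes trivial under a homomorphism A * ℤ → B fixing A and sending t to b, then the commutator [a, u] gives a nontrivial relation among the conjugates A^{b^i}. -/

import Mathlib

open Monoid Monoid.CoprodI Monoid.CoprodI.Word

theorem aux_exists_word_mul_of {ι : Type*} {G : ι → Type*} [∀ i, Group (G i)]
    (u : Word G) {i : ι} (a : G i) (ha : a ≠ 1) :
    ∃ w : Word G, w.prod = u.prod * of a ∧
      (w.toList = u.toList ++ [⟨i, a⟩] ∨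
       ∃ (g : G i) (l : List (Σ j, G j)), u.toList = l ++ [⟨i, g⟩] ∧
         (w.toList = l ++ [⟨i, g * a⟩] ∨ w.toList = l)) := by
  classical
  induction u using Word.consRecOn with
  | empty =>
      refine ⟨Word.cons a Word.empty (by simp [Word.fstIdx, Word.empty_toList]) ha, by simp, Or.inl ?_⟩
      simp
  | cons k m u' h1 h2 ih =>
      rcases eq_or_ne u'.toList [] with hu' | hu'
      · -- u' is empty
        have hu'e : u' = Word.empty := Word.ext hu'
        subst hu'e
        rcases eq_or_ne k i with rfl | hki
        · -- same index: merge / cancel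
          rcases eq_or_ne (m * a) 1 with hma | hma
          · refine ⟨Word.empty, ?_, Or.inr ⟨m, [], by simp, Or.inr rfl⟩⟩
            simp [Word.prod_cons, ← map_mul, hma]
          · refine ⟨Word.cons (m * a) Word.empty (by simp [Word.fstIdx, Word.empty_toList]) hma,
              ?_, Or.inr ⟨m, [], by simp, Or.inl (by simp)⟩⟩
            simp [mul_assoc, map_mul]
        · refine ⟨Word.cons m (Word.cons a Word.empty (by simp [Word.fstIdx, Word.empty_toList]) ha)
            (by simp [Ne.symm hki]) h2, ?_, Or.inl (by simp)⟩
          simp [mul_assoc]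
      · -- u' nonempty
        obtain ⟨w', hw', hcase⟩ := ih
        have hfst : w'.fstIdx = u'.fstIdx ∨ w'.toList = [] := by
          rcases hcase with h | ⟨g, l, hl, h | h⟩
          · left; simp [Word.fstIdx, h, List.head?_append_of_ne_nil _ hu']
          · left
            rcases eq_or_ne l [] with rfl | hlne
            · simp [Word.fstIdx, h, hl]
            · simp [Word.fstIdx, h, hl, List.head?_append_of_ne_nil _ hlne]
          · rcases eq_or_ne l [] with rfl | hlne
            · right; simp [h]
            · left; simp [Word.fstIdx, h, hl, List.head?_append_of_ne_nil _ hlne]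
        have hne : w'.fstIdx ≠ some k := by
          rcases hfst with h | h
          · rw [h]; exact h1
          · simp [Word.fstIdx, h]
        refine ⟨Word.cons m w' hne h2, ?_, ?_⟩
        · rw [Word.prod_cons, hw', Word.prod_cons, mul_assoc]
        · rcases hcase with h | ⟨g, l, hl, h | h⟩
          · exact Or.inl (by simp [h])
          · exact Or.inr ⟨g, ⟨k, m⟩ :: l, by simp [hl], Or.inl (by simp [h])⟩
          · exact Or.inr ⟨g, ⟨k, m⟩ :: l, by simp [hl], Or.inr (by simp [h])⟩


theorem aux_mem_range_of_commute {ι : Type*} {G : ι → Type*} [∀ i, Group (G i)] {i : ι}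
    {x : Monoid.CoprodI G} {a a' : G i} (ha : a ≠ 1)
    (hcomm : x * of a = of a' * x) : ∃ c : G i, x = of c := by
  classical
  have ha' : a' ≠ 1 := by
    rintro rfl
    rw [map_one, one_mul, mul_eq_left] at hcomm
    exact ha (by simpa using (of_injective i).eq_iff.mp (hcomm.trans (map_one _).symm))
  set u0 := Word.equiv x with hu0
  set p := Word.equivPair i u0 with hp
  have hrcons : Word.rcons p = u0 := by
    rw [hp, ← Word.equivPair_symm, Equiv.symm_apply_apply]
  have hxprod : u0.prod = x := by
    rw [hu0]
    exact Word.equiv.symm_apply_apply x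
  have hx : x = of p.head * p.tail.prod := by
    rw [← hxprod, ← hrcons, Word.prod_rcons]
  set a'' := p.head⁻¹ * a' * p.head with ha''def
  have ha'' : a'' ≠ 1 := fun h => ha' (by
    have h2 : a' = p.head * a'' * p.head⁻¹ := by rw [ha''def]; group
    rw [h2, h, mul_one, mul_inv_cancel])
  have heq : p.tail.prod * of a = of a'' * p.tail.prod := by
    apply mul_left_cancel (a := of p.head)
    have h1 : of p.head * (of a'' * p.tail.prod) = of a' * (of p.head * p.tail.prod) := by
      have h3 : p.head * a'' = a' * p.head := by rw [ha''def]; group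
      rw [← mul_assoc, ← map_mul, h3, map_mul, mul_assoc]
    rw [h1, ← mul_assoc, ← hx, hcomm]
  obtain ⟨w, hw, hcase⟩ := aux_exists_word_mul_of p.tail a ha
  have hwc : w = Word.cons a'' p.tail p.fstIdx_ne ha'' := by
    apply Word.equiv.symm.injective
    show w.prod = (Word.cons a'' p.tail p.fstIdx_ne ha'').prod
    rw [hw, Word.prod_cons, heq]
  rcases hcase with h | ⟨g, l, hl, h | h⟩
  · rw [hwc] at h
    simp only [Word.cons_toList] at h
    rcases eq_or_ne p.tail.toList [] with ht | ht
    · refine ⟨p.head, ?_⟩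
      rw [hx]
      have : p.tail = Word.empty := Word.ext ht
      rw [this, Word.prod_empty, mul_one]
    · exfalso
      apply p.fstIdx_ne
      have hhead : p.tail.toList.head? = some ⟨i, a''⟩ := by
        have := congrArg List.head? h
        rwa [List.head?_cons, List.head?_append_of_ne_nil _ ht, eq_comm] at this
      simp [Word.fstIdx, hhead]
  · exfalso
    have h1 := congrArg List.length h
    have h2 := congrArg List.length (hwc ▸ rfl : w.toList = ⟨i, a''⟩ :: p.tail.toList)
    rw [hl] at h2
    simp at h1 h2
    omega
  · exfalso
    have h1 := congrArg List.length h
    have h2 := congrArg List.length (hwc ▸ rfl : w.toList = ⟨i, a''⟩ :: p.tail.toList)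
    rw [hl] at h2
    simp at h1 h2
    omega


namespace Lemma5Aux

variable {B : Type*} [Group B] (A : Subgroup B)

def shiftHom (k : ℤ) : Monoid.CoprodI (fun _ : ℤ => A) →* Monoid.CoprodI (fun _ : ℤ => A) :=
  Monoid.CoprodI.lift fun j : ℤ =>
    (Monoid.CoprodI.of (M := fun _ : ℤ => A) (i := j - k))

@[simp] lemma shiftHom_of (k j : ℤ) (a : A) :
    shiftHom A k (Monoid.CoprodI.of (M := fun _ : ℤ => A) (i := j) a)
      = Monoid.CoprodI.of (M := fun _ : ℤ => A) (i := j - k) a :=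
  Monoid.CoprodI.lift_of _ _

lemma shiftHom_comp (k l : ℤ) :
    (shiftHom A k).comp (shiftHom A l) = shiftHom A (l + k) := by
  apply Monoid.CoprodI.ext_hom
  intro j
  ext a
  simp [sub_sub]

lemma shiftHom_zero : shiftHom A 0 = MonoidHom.id _ := by
  apply Monoid.CoprodI.ext_hom
  intro j
  ext a
  simp

def shiftEquiv' (k : ℤ) : Monoid.CoprodI (fun _ : ℤ => A) ≃* Monoid.CoprodI (fun _ : ℤ => A) :=
  MonoidHom.toMulEquiv (shiftHom A k) (shiftHom A (-k))
    (by rw [shiftHom_comp]; simpa using shiftHom_zero A)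
    (by rw [shiftHom_comp]; simpa using shiftHom_zero A)

def shift : Multiplicative ℤ →* MulAut (Monoid.CoprodI (fun _ : ℤ => A)) :=
  MonoidHom.mk' (fun g => shiftEquiv' A g.toAdd) (by
    intro g h
    apply MulEquiv.ext
    intro x
    have h1 := DFunLike.congr_fun (shiftHom_comp A g.toAdd h.toAdd) x
    simp only [MonoidHom.comp_apply] at h1
    show shiftHom A (g * h).toAdd x = shiftHom A g.toAdd (shiftHom A h.toAdd x)
    rw [h1]
    have h2 : (g * h).toAdd = h.toAdd + g.toAdd := by
      simp [add_comm]
    rw [h2])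

@[simp] lemma shift_of (g : Multiplicative ℤ) (j : ℤ) (a : A) :
    shift A g (Monoid.CoprodI.of (M := fun _ : ℤ => A) (i := j) a)
      = Monoid.CoprodI.of (M := fun _ : ℤ => A) (i := j - g.toAdd) a :=
  shiftHom_of A _ _ _

end Lemma5Aux

theorem commutator_gives_nontrivial_relation_among_conjugates
    {B : Type*} [Group B] (A : Subgroup B) (hA : A ≠ ⊥) (b : B)
    (a : A) (ha : a ≠ 1)
    (w : Monoid.Coprod A (Multiplicative ℤ)) (hw : w ≠ 1)
    (hker : Monoid.Coprod.lift A.subtype (zpowersHom B b) w = 1) :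
    ∃ W : Monoid.CoprodI (fun _ : ℤ => A),
      W ≠ 1 ∧
      (Monoid.CoprodI.lift
        (fun i : ℤ =>
          (MulAut.conj
            ((Monoid.Coprod.inr (Multiplicative.ofAdd (1 : ℤ)) :
              Monoid.Coprod A (Multiplicative ℤ)) ^ (-i))).toMonoidHom.comp
            Monoid.Coprod.inl :
          ∀ i : ℤ, (fun _ : ℤ => A) i →* Monoid.Coprod A (Multiplicative ℤ))) W
        = (Monoid.Coprod.inl a)⁻¹ * w⁻¹ * Monoid.Coprod.inl a * w ∧
      (Monoid.CoprodI.lift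
        (fun i : ℤ =>
          (MulAut.conj (b ^ (-i))).toMonoidHom.comp A.subtype :
          ∀ i : ℤ, (fun _ : ℤ => A) i →* B)) W = 1 := by
  classical
  set t₁ : Monoid.Coprod A (Multiplicative ℤ) := Monoid.Coprod.inr (Multiplicative.ofAdd (1 : ℤ))
    with ht₁
  have ht : ∀ m : ℤ, t₁ ^ m = Monoid.Coprod.inr (Multiplicative.ofAdd m) := by
    intro m
    rw [ht₁, ← map_zpow]
    congr 1
    apply Multiplicative.toAdd.injective
    simp [toAdd_zpow]
  set Ψ : Monoid.CoprodI (fun _ : ℤ => A) →* Monoid.Coprod A (Multiplicative ℤ) :=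
    (Monoid.CoprodI.lift
      (fun i : ℤ =>
        (MulAut.conj (t₁ ^ (-i))).toMonoidHom.comp Monoid.Coprod.inl :
        ∀ i : ℤ, (fun _ : ℤ => A) i →* Monoid.Coprod A (Multiplicative ℤ))) with hΨ
  have hΨof : ∀ (j : ℤ) (c : A),
      Ψ (Monoid.CoprodI.of (M := fun _ : ℤ => A) (i := j) c)
        = t₁ ^ (-j) * Monoid.Coprod.inl c * t₁ ^ j := by
    intro j c
    rw [hΨ, Monoid.CoprodI.lift_of]
    simp only [MonoidHom.comp_apply, MulEquiv.coe_toMonoidHom, MulAut.conj_apply, zpow_neg,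
      inv_inv]
  -- the compatibility condition for the semidirect product
  have hcompat : ∀ g : Multiplicative ℤ,
      Ψ.comp ((Lemma5Aux.shift A g).toMonoidHom)
        = (MulAut.conj (Monoid.Coprod.inr g : Monoid.Coprod A (Multiplicative ℤ))).toMonoidHom.comp
            Ψ := by
    intro g
    apply Monoid.CoprodI.ext_hom
    intro j
    ext c
    simp only [MonoidHom.comp_apply, MulEquiv.coe_toMonoidHom, Lemma5Aux.shift_of,
      MulAut.conj_apply]
    rw [hΨof, hΨof]
    rw [ht (-(j - g.toAdd)), ht (j - g.toAdd), ht (-j), ht j]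
    have e1' : Multiplicative.ofAdd (-(j - g.toAdd)) = g * Multiplicative.ofAdd (-j) := by
      apply Multiplicative.toAdd.injective
      simp only [toAdd_ofAdd, toAdd_mul]
      omega
    have e2' : Multiplicative.ofAdd (j - g.toAdd) = Multiplicative.ofAdd j * g⁻¹ := by
      apply Multiplicative.toAdd.injective
      simp only [toAdd_ofAdd, toAdd_mul, toAdd_inv]
      omega
    have e1 : (Monoid.Coprod.inr (Multiplicative.ofAdd (-(j - g.toAdd))) :
        Monoid.Coprod A (Multiplicative ℤ))
        = Monoid.Coprod.inr g * Monoid.Coprod.inr (Multiplicative.ofAdd (-j)) := by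
      rw [e1', map_mul]
    have e2 : (Monoid.Coprod.inr (Multiplicative.ofAdd (j - g.toAdd)) :
        Monoid.Coprod A (Multiplicative ℤ))
        = Monoid.Coprod.inr (Multiplicative.ofAdd j) * (Monoid.Coprod.inr g)⁻¹ := by
      rw [e2', map_mul, map_inv]
    rw [e1, e2]
    simp [mul_assoc]
  set π : SemidirectProduct (Monoid.CoprodI (fun _ : ℤ => A)) (Multiplicative ℤ)
      (Lemma5Aux.shift A) →* Monoid.Coprod A (Multiplicative ℤ) :=
    SemidirectProduct.lift Ψ Monoid.Coprod.inr hcompat with hπ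
  set ι₀ : (A : Type _) →* Monoid.CoprodI (fun _ : ℤ => A) :=
    (Monoid.CoprodI.of (M := fun _ : ℤ => A) (i := (0 : ℤ))) with hι₀
  set Φ : Monoid.Coprod A (Multiplicative ℤ) →*
      SemidirectProduct (Monoid.CoprodI (fun _ : ℤ => A)) (Multiplicative ℤ)
        (Lemma5Aux.shift A) :=
    Monoid.Coprod.lift (SemidirectProduct.inl.comp ι₀) SemidirectProduct.inr with hΦ
  have hπΦ : ∀ x, π (Φ x) = x := by
    intro x
    have : π.comp Φ = MonoidHom.id _ := by
      apply Monoid.Coprod.hom_ext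
      · ext c
        simp only [MonoidHom.comp_apply, MonoidHom.id_apply, hΦ, Monoid.Coprod.lift_apply_inl,
          hπ, SemidirectProduct.lift_inl]
        rw [hι₀, hΨof]
        simp
      · ext g
        simp [hΦ, hπ]
    exact DFunLike.congr_fun this x
  -- the commutator
  set c : Monoid.Coprod A (Multiplicative ℤ) :=
    (Monoid.Coprod.inl a)⁻¹ * w⁻¹ * Monoid.Coprod.inl a * w with hc
  have hΦinl : ∀ d : A, Φ (Monoid.Coprod.inl d) = SemidirectProduct.inl (ι₀ d) := by
    intro d
    rw [hΦ, Monoid.Coprod.lift_apply_inl]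
    rfl
  have hright : (Φ c).right = 1 := by
    have : (Φ (Monoid.Coprod.inl a)).right = 1 := by rw [hΦinl]; simp
    rw [hc]
    simp only [map_mul, map_inv, SemidirectProduct.mul_right, SemidirectProduct.inv_right, this]
    group
  set W : Monoid.CoprodI (fun _ : ℤ => A) := (Φ c).left with hW
  have hΦc : Φ c = SemidirectProduct.inl W := by
    rw [hW, ← SemidirectProduct.inl_left_mul_inr_right (Φ c), hright]
    simp
  have hΨW : Ψ W = c := by
    have : π (Φ c) = c := hπΦ c
    rwa [hΦc, hπ, SemidirectProduct.lift_inl] at this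
  -- the map to B
  set φ : Monoid.Coprod A (Multiplicative ℤ) →* B :=
    Monoid.Coprod.lift A.subtype (zpowersHom B b) with hφ
  have hΘ : (Monoid.CoprodI.lift
      (fun i : ℤ =>
        (MulAut.conj (b ^ (-i))).toMonoidHom.comp A.subtype :
        ∀ i : ℤ, (fun _ : ℤ => A) i →* B)) = φ.comp Ψ := by
    apply Monoid.CoprodI.ext_hom
    intro j
    ext d
    simp only [MonoidHom.comp_apply, Monoid.CoprodI.lift_of, MulEquiv.coe_toMonoidHom,
      MulAut.conj_apply]
    rw [hΨof]
    simp only [map_mul, map_zpow, hφ]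
    simp [ht₁, Monoid.Coprod.lift_apply_inr, Monoid.Coprod.lift_apply_inl, zpow_neg]
  have hφc : φ c = 1 := by
    rw [hc]
    simp only [map_mul, map_inv, hker]
    simp
  refine ⟨W, ?_, hΨW, by rw [hΘ]; simp only [MonoidHom.comp_apply, hΨW]; exact hφc⟩
  -- nontriviality
  intro hW1
  have hc1 : c = 1 := by
    have := hπΦ c
    rw [hΦc, hW1] at this
    simpa using this.symm
  have hcomm : Monoid.Coprod.inl a * w = w * Monoid.Coprod.inl a := by
    have h7 : (w * Monoid.Coprod.inl a)⁻¹ * (Monoid.Coprod.inl a * w) = 1 := by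
      rw [← hc1, hc]; group
    rw [inv_mul_eq_one] at h7
    exact h7.symm
  have hΦcomm := congrArg Φ hcomm
  rw [map_mul, map_mul, hΦinl] at hΦcomm
  set W₀ : Monoid.CoprodI (fun _ : ℤ => A) := (Φ w).left with hW₀
  set n : Multiplicative ℤ := (Φ w).right with hn
  have heq : ι₀ a * W₀ = W₀ * Lemma5Aux.shift A n (ι₀ a) := by
    have := congrArg SemidirectProduct.left hΦcomm
    simpa [hW₀, hn] using this
  have hshift : Lemma5Aux.shift A n (ι₀ a)
      = Monoid.CoprodI.of (M := fun _ : ℤ => A) (i := 0 - n.toAdd) a := by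
    rw [hι₀]
    exact Lemma5Aux.shift_of A n 0 a
  rcases eq_or_ne n.toAdd 0 with hm | hm
  · -- no shift : W₀ commutes with ι₀ a
    rw [hshift, hm, sub_zero] at heq
    obtain ⟨c₀, hc₀⟩ := aux_mem_range_of_commute ha heq.symm
    have hn1 : n = 1 := by
      apply Multiplicative.toAdd.injective
      simpa using hm
    have hwc : w = Monoid.Coprod.inl c₀ := by
      have h8 := hπΦ w
      rw [← SemidirectProduct.inl_left_mul_inr_right (Φ w), ← hW₀, ← hn, hn1] at h8
      rw [map_one, mul_one, hπ, SemidirectProduct.lift_inl, hc₀] at h8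
      rw [← h8]
      rw [← hι₀, hΨof]  -- hc₀ : W₀ = of c₀ at index 0
      simp
    apply hw
    have hcB : φ (Monoid.Coprod.inl c₀) = 1 := by rw [← hwc]; exact hker
    have hc01 : c₀ = 1 := by
      apply Subtype.ext
      simpa [hφ, Monoid.Coprod.lift_apply_inl] using hcB
    rw [hwc, hc01, map_one]
  · -- nontrivial shift : project to the factor at index -n.toAdd
    rw [hshift] at heq
    set χ : Monoid.CoprodI (fun _ : ℤ => A) →* A :=
      Monoid.CoprodI.lift (fun j : ℤ =>
        (if j = 0 - n.toAdd then MonoidHom.id (A : Type _) else 1 :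
          (fun _ : ℤ => A) j →* A)) with hχ
    have hχ0 : χ (ι₀ a) = 1 := by
      rw [hι₀, hχ, Monoid.CoprodI.lift_of]
      rw [if_neg (by omega)]
      rfl
    have hχm : χ (Monoid.CoprodI.of (M := fun _ : ℤ => A) (i := 0 - n.toAdd) a) = a := by
      rw [hχ, Monoid.CoprodI.lift_of, if_pos rfl]
      rfl
    have := congrArg χ heq
    rw [map_mul, map_mul, hχ0, hχm, one_mul] at this
    exact ha (by rwa [left_eq_mul] at this)
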